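/- arXiv:2307.16460 — 4 statements merged into one kernel-verified Lean document; each statement's English description precedes it below -/
import Mathlib

section
/- For a shifted skew-symmetric matrix A = αI + S, the vectors A^T S^{2i} b and A^T S^{2j+1} b are orthogonal for all i, j ≥ 0. -/
open Matrix in
lemma skew_quadform_zero {n : ℕ} (M : Matrix (Fin n) (Fin n) ℝ) (hM : Mᵀ = -M)
    (b : Fin n → ℝ) : b ⬝ᵥ M.mulVec b = 0 := by
  have h : b ⬝ᵥ M.mulVec b = Mᵀ.mulVec b ⬝ᵥ b := by
    rw [Matrix.dotProduct_mulVec, Matrix.mulVec_transpose]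
  rw [hM] at h
  simp only [Matrix.neg_mulVec, neg_dotProduct, dotProduct_comm b] at h
  rw [dotProduct_comm]
  linarith

open Matrix in
theorem even_odd_krylov_orthogonal {n : ℕ} (S : Matrix (Fin n) (Fin n) ℝ)
    (hS : Sᵀ = -S) (α : ℝ) (b : Fin n → ℝ) (i j : ℕ) :
    ((α • (1 : Matrix (Fin n) (Fin n) ℝ) + S)ᵀ * S ^ (2 * i)).mulVec b ⬝ᵥ
      ((α • (1 : Matrix (Fin n) (Fin n) ℝ) + S)ᵀ * S ^ (2 * j + 1)).mulVec b = 0 := by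
  set A : Matrix (Fin n) (Fin n) ℝ := α • (1 : Matrix (Fin n) (Fin n) ℝ) + S with hA
  have hAT : Aᵀ = α • (1 : Matrix (Fin n) (Fin n) ℝ) - S := by
    rw [hA, Matrix.transpose_add, Matrix.transpose_smul, Matrix.transpose_one, hS]
    abel
  have hdot : b ⬝ᵥ ((Aᵀ * S ^ (2 * i))ᵀ * (Aᵀ * S ^ (2 * j + 1))).mulVec b
      = (Aᵀ * S ^ (2 * i)).mulVec b ⬝ᵥ (Aᵀ * S ^ (2 * j + 1)).mulVec b := by
    rw [← Matrix.mulVec_mulVec, Matrix.dotProduct_mulVec, Matrix.vecMul_transpose]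
  rw [← hdot]
  apply skew_quadform_zero
  have hSpow_even : ∀ k : ℕ, (S ^ (2 * k))ᵀ = S ^ (2 * k) := by
    intro k
    rw [Matrix.transpose_pow, hS, Even.neg_pow ⟨k, by ring⟩]
  have hSpow_odd : ∀ k : ℕ, (S ^ (2 * k + 1))ᵀ = -(S ^ (2 * k + 1)) := by
    intro k
    rw [Matrix.transpose_pow, hS, Odd.neg_pow ⟨k, by ring⟩]
  have hAAT : A * Aᵀ = α ^ 2 • (1 : Matrix (Fin n) (Fin n) ℝ) - S ^ 2 := by
    rw [hA, hAT]
    simp only [Matrix.add_mul, Matrix.mul_sub, Matrix.smul_mul, Matrix.mul_smul,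
      smul_smul, sq, mul_one, one_mul]
    module
  have hM : (Aᵀ * S ^ (2 * i))ᵀ * (Aᵀ * S ^ (2 * j + 1))
      = α ^ 2 • S ^ (2 * (i + j) + 1) - S ^ (2 * (i + j + 1) + 1) := by
    rw [Matrix.transpose_mul, Matrix.transpose_transpose, hSpow_even]
    rw [show S ^ (2 * i) * A * (Aᵀ * S ^ (2 * j + 1))
        = S ^ (2 * i) * (A * Aᵀ) * S ^ (2 * j + 1) by
      rw [← mul_assoc, mul_assoc (S ^ (2 * i))]]
    rw [hAAT, Matrix.mul_sub, Matrix.sub_mul, Matrix.mul_smul, Matrix.smul_mul, mul_one,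
      ← pow_add, ← pow_add, ← pow_add]
    congr 2 <;> ring
  rw [hM, Matrix.transpose_sub, Matrix.transpose_smul, hSpow_odd, hSpow_odd]
  simp
  abel
end

section
/- For a skew-symmetric matrix S, the Krylov subspace generated by A^T A = (αI+S)^T(αI+S) with starting vector A^T b is contained in K_{2k}(S, b). -/
open Matrix in
private lemma krylov_aux {n : ℕ} (N : Matrix (Fin n) (Fin n) ℝ) (c d : ℝ)
    (v : Fin n → ℝ) :
    ∀ i : ℕ, ((c • (1 : Matrix (Fin n) (Fin n) ℝ) + d • N) ^ i).mulVec v ∈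
      Submodule.span ℝ {x | ∃ j ≤ i, x = (N ^ j).mulVec v} := by
  intro i
  induction i with
  | zero =>
    apply Submodule.subset_span
    exact ⟨0, le_refl 0, by simp⟩
  | succ i ih =>
    have hmono : Submodule.span ℝ {x | ∃ j ≤ i, x = (N ^ j).mulVec v} ≤
        Submodule.span ℝ {x | ∃ j ≤ i + 1, x = (N ^ j).mulVec v} := by
      apply Submodule.span_mono
      rintro x ⟨j, hj, rfl⟩
      exact ⟨j, by omega, rfl⟩
    have hmap : ∀ y ∈ Submodule.span ℝ {x | ∃ j ≤ i, x = (N ^ j).mulVec v},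
        N.mulVec y ∈ Submodule.span ℝ {x | ∃ j ≤ i + 1, x = (N ^ j).mulVec v} := by
      intro y hy
      have : N.mulVecLin y ∈ Submodule.map N.mulVecLin
          (Submodule.span ℝ {x | ∃ j ≤ i, x = (N ^ j).mulVec v}) :=
        Submodule.mem_map_of_mem hy
      rw [Submodule.map_span] at this
      refine Submodule.span_le.2 ?_ this
      rintro z ⟨w, ⟨j, hj, rfl⟩, rfl⟩
      apply Submodule.subset_span
      refine ⟨j + 1, by omega, ?_⟩
      simp [Matrix.mulVecLin_apply, Matrix.mulVec_mulVec, pow_succ']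
    have hstep : ((c • (1 : Matrix (Fin n) (Fin n) ℝ) + d • N) ^ (i + 1)).mulVec v =
        c • (((c • (1 : Matrix (Fin n) (Fin n) ℝ) + d • N) ^ i).mulVec v) +
        d • N.mulVec (((c • (1 : Matrix (Fin n) (Fin n) ℝ) + d • N) ^ i).mulVec v) := by
      rw [pow_succ']
      simp [add_mul, Matrix.smul_mul, one_mul, Matrix.add_mulVec,
        Matrix.smul_mulVec]
    rw [hstep]
    exact Submodule.add_mem _ (Submodule.smul_mem _ _ (hmono ih))
      (Submodule.smul_mem _ _ (hmap _ ih))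

open Matrix in
theorem krylov_normal_eq_and_subset {n : ℕ} (S : Matrix (Fin n) (Fin n) ℝ)
    (hS : Sᵀ = -S) (α : ℝ) (b : Fin n → ℝ) (k : ℕ) (hk : 1 ≤ k) :
    (Submodule.span ℝ
        {x | ∃ i < k, x = (((α • (1 : Matrix (Fin n) (Fin n) ℝ) + S)ᵀ *
            (α • (1 : Matrix (Fin n) (Fin n) ℝ) + S)) ^ i).mulVec
              ((α • (1 : Matrix (Fin n) (Fin n) ℝ) + S)ᵀ.mulVec b)} =
      Submodule.span ℝ
        {x | ∃ i < k, x = ((S ^ 2) ^ i).mulVec (α • b - S.mulVec b)}) ∧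
    Submodule.span ℝ
        {x | ∃ i < k, x = (((α • (1 : Matrix (Fin n) (Fin n) ℝ) + S)ᵀ *
            (α • (1 : Matrix (Fin n) (Fin n) ℝ) + S)) ^ i).mulVec
              ((α • (1 : Matrix (Fin n) (Fin n) ℝ) + S)ᵀ.mulVec b)} ≤
      Submodule.span ℝ {x | ∃ i < 2 * k, x = (S ^ i).mulVec b} := by
  set A : Matrix (Fin n) (Fin n) ℝ := α • (1 : Matrix (Fin n) (Fin n) ℝ) + S with hA
  have hAT : Aᵀ = α • (1 : Matrix (Fin n) (Fin n) ℝ) + (-1 : ℝ) • S := by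
    simp [hA, Matrix.transpose_add, Matrix.transpose_smul, hS]
  have hM : Aᵀ * A = (α ^ 2) • (1 : Matrix (Fin n) (Fin n) ℝ) + (-1 : ℝ) • (S ^ 2) := by
    rw [hAT, hA]
    simp only [mul_add, add_mul, Matrix.smul_mul, Matrix.mul_smul, one_mul, mul_one,
      smul_smul, pow_two]
    module
  have hrev : S ^ 2 = (α ^ 2) • (1 : Matrix (Fin n) (Fin n) ℝ) + (-1 : ℝ) • (Aᵀ * A) := by
    rw [hM]; module
  have hv : Aᵀ.mulVec b = α • b - S.mulVec b := by
    rw [hAT]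
    simp [Matrix.add_mulVec, Matrix.smul_mulVec, Matrix.one_mulVec, Matrix.neg_mulVec, sub_eq_add_neg]
  have heq : Submodule.span ℝ
        {x | ∃ i < k, x = ((Aᵀ * A) ^ i).mulVec (Aᵀ.mulVec b)} =
      Submodule.span ℝ
        {x | ∃ i < k, x = ((S ^ 2) ^ i).mulVec (α • b - S.mulVec b)} := by
    apply le_antisymm
    · apply Submodule.span_le.2
      rintro x ⟨i, hi, rfl⟩
      rw [hM, hv]
      have := krylov_aux (S ^ 2) (α ^ 2) (-1) (α • b - S.mulVec b) i
      refine Submodule.span_mono ?_ this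
      rintro y ⟨j, hj, rfl⟩
      exact ⟨j, by omega, rfl⟩
    · apply Submodule.span_le.2
      rintro x ⟨i, hi, rfl⟩
      rw [hrev, ← hv]
      have := krylov_aux (Aᵀ * A) (α ^ 2) (-1) (Aᵀ.mulVec b) i
      refine Submodule.span_mono ?_ this
      rintro y ⟨j, hj, rfl⟩
      exact ⟨j, by omega, rfl⟩
  refine ⟨heq, ?_⟩
  rw [heq]
  apply Submodule.span_le.2
  rintro x ⟨i, hi, rfl⟩
  have hx : ((S ^ 2) ^ i).mulVec (α • b - S.mulVec b) =
      α • ((S ^ (2 * i)).mulVec b) - (S ^ (2 * i + 1)).mulVec b := by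
    have h1 : S ^ (2 * i + 1) = (S ^ 2) ^ i * S := by rw [pow_succ, pow_mul]
    have h2 : S ^ (2 * i) = (S ^ 2) ^ i := pow_mul S 2 i
    rw [h1, h2, Matrix.mulVec_sub, Matrix.mulVec_smul, Matrix.mulVec_mulVec]
  rw [hx]
  exact Submodule.sub_mem _
    (Submodule.smul_mem _ _ (Submodule.subset_span ⟨2 * i, by omega, rfl⟩))
    (Submodule.subset_span ⟨2 * i + 1, by omega, rfl⟩)
end

section
/- If u and v are orthogonal unit-norm related vectors in the Golub–Kahan relation for a shifted skew-symmetric matrix, the subdiagonal bidiagonalization coefficient satisfies β_{j+1} = γ_{2j+1}γ_{2j}/α_j with α_j > γ_{2j}, hence β_{j+1} < γ_{2j+1}. -/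
open Matrix in
/-- Comparison of the Golub–Kahan bidiagonalization coefficients `a j` (the `α_j` of the
paper) and `β j` of `A = α I + S` with the Lanczos coefficients `γ k` of the
skew-symmetric matrix `S`, both started from the same vector `b`.  The recurrences and
orthonormality are assumed to hold up to step `N` (before termination).  Then
`a j > γ (2 j)`, `β (j+1) = γ (2 j + 1) γ (2 j) / a j < γ (2 j + 1)` (and in fact
`a j ≥ √(α² + γ (2 j)²)`). -/
theorem gk_coefficients_of_shifted_skew {n N : ℕ} (S : Matrix (Fin n) (Fin n) ℝ)
    (hS : Sᵀ = -S) (α : ℝ) (hα : α ≠ 0) (b : Fin n → ℝ) (hb : b ≠ 0)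
    (w : ℕ → Fin n → ℝ) (γ : ℕ → ℝ)
    (u v : ℕ → Fin n → ℝ) (a β : ℕ → ℝ)
    -- Lanczos tridiagonalization of `S` with starting vector `b`:
    (hw0 : w 0 = 0)
    (hγpos : ∀ k, 1 ≤ k → k ≤ N → γ k > 0)
    (hγ1 : γ 1 • w 1 = b)
    (hLan : ∀ k, 1 ≤ k → k + 1 ≤ N → γ (k + 1) • w (k + 1) = S.mulVec (w k) + γ k • w (k - 1))
    (hworth : ∀ i j, 1 ≤ i → i ≤ N → 1 ≤ j → j ≤ N → w i ⬝ᵥ w j = if i = j then 1 else 0)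
    -- Golub–Kahan bidiagonalization of `A = α I + S` with starting vector `b`:
    (hv0 : v 0 = 0)
    (hβ1 : β 1 • u 1 = b)
    (hapos : ∀ j, 1 ≤ j → 2 * j ≤ N → a j > 0)
    (hβpos : ∀ j, 1 ≤ j → 2 * j - 1 ≤ N → β j > 0)
    (hGK1 : ∀ j, 1 ≤ j → 2 * j + 1 ≤ N →
      β (j + 1) • u (j + 1) =
        (α • (1 : Matrix (Fin n) (Fin n) ℝ) + S).mulVec (v j) - a j • u j)
    (hGK2 : ∀ j, 1 ≤ j → 2 * j ≤ N →
      a j • v j = (α • (1 : Matrix (Fin n) (Fin n) ℝ) + S)ᵀ.mulVec (u j) - β j • v (j - 1))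
    (huorth : ∀ i j, 1 ≤ i → 2 * i - 1 ≤ N → 1 ≤ j → 2 * j - 1 ≤ N →
      u i ⬝ᵥ u j = if i = j then 1 else 0)
    (hvorth : ∀ i j, 1 ≤ i → 2 * i ≤ N → 1 ≤ j → 2 * j ≤ N →
      v i ⬝ᵥ v j = if i = j then 1 else 0) :
    ∀ j, 1 ≤ j → 2 * j + 1 ≤ N →
      a j ≥ Real.sqrt (α ^ 2 + γ (2 * j) ^ 2) ∧
      a j > γ (2 * j) ∧
      β (j + 1) = γ (2 * j + 1) * γ (2 * j) / a j ∧
      β (j + 1) < γ (2 * j + 1) := by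
  have hone : ∀ x : Fin n → ℝ,
      (α • (1 : Matrix (Fin n) (Fin n) ℝ) + S).mulVec x = α • x + S.mulVec x := by
    intro x
    rw [Matrix.add_mulVec, Matrix.smul_mulVec, Matrix.one_mulVec]
  have honeT : ∀ x : Fin n → ℝ,
      (α • (1 : Matrix (Fin n) (Fin n) ℝ) + S)ᵀ.mulVec x = α • x - S.mulVec x := by
    intro x
    rw [Matrix.transpose_add, Matrix.transpose_smul, Matrix.transpose_one, hS,
      Matrix.add_mulVec, Matrix.smul_mulVec, Matrix.one_mulVec, Matrix.neg_mulVec,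
      sub_eq_add_neg]
  have hSw : ∀ k, 1 ≤ k → k + 1 ≤ N →
      S.mulVec (w k) = γ (k + 1) • w (k + 1) - γ k • w (k - 1) := by
    intro k h1 h2
    rw [hLan k h1 h2]; abel
  have hww1 : ∀ i, 1 ≤ i → i ≤ N → w i ⬝ᵥ w i = 1 := by
    intro i h1 h2; rw [hworth i i h1 h2 h1 h2]; simp
  have hww0 : ∀ i k, 1 ≤ i → i ≤ N → 1 ≤ k → k ≤ N → i ≠ k → w i ⬝ᵥ w k = 0 := by
    intro i k h1 h2 h3 h4 h5; rw [hworth i k h1 h2 h3 h4, if_neg h5]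
  have hα2 : 0 < α ^ 2 := lt_of_le_of_ne (sq_nonneg α) (Ne.symm (pow_ne_zero 2 hα))
  -- the key lemma: one Golub-Kahan step
  have L : ∀ j (s : ℝ), 1 ≤ j → 2 * j + 1 ≤ N → (s = 1 ∨ s = -1) →
      u j = s • w (2 * j - 1) →
      (2 ≤ j → u (j - 1) = (-s) • w (2 * j - 3)) →
      (2 ≤ j → β j = γ (2 * j - 1) * γ (2 * j - 2) / a (j - 1)) →
      a j ^ 2 = α ^ 2 + γ (2 * j) ^ 2 + (if 2 ≤ j then γ (2 * j - 1) ^ 2 - β j ^ 2 else 0) →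
      β (j + 1) = γ (2 * j + 1) * γ (2 * j) / a j ∧ u (j + 1) = (-s) • w (2 * j + 1) := by
    intro j s hj hjN hs hu hu' hβf hii
    have ha : 0 < a j := hapos j hj (by omega)
    have hβ' : 0 < β (j + 1) := hβpos (j + 1) (by omega) (by omega)
    have hγq : 0 < γ (2 * j) := hγpos _ (by omega) (by omega)
    have hγr : 0 < γ (2 * j + 1) := hγpos _ (by omega) (by omega)
    have hvec : (a j * β (j + 1)) • u (j + 1)
        = (-(s * (γ (2 * j) * γ (2 * j + 1)))) • w (2 * j + 1) := by
      rcases eq_or_lt_of_le hj with h1 | h2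
      · -- j = 1
        subst h1
        rw [show 2 * 1 - 1 = 1 from by norm_num] at hu
        rw [if_neg (by omega), show 2 * 1 = 2 from by norm_num] at hii
        have hS1 : S.mulVec (w 1) = γ 2 • w 2 := by
          have h := hSw 1 (by omega) (by omega)
          rw [show 1 + 1 = 2 from by norm_num, show 1 - 1 = 0 from by norm_num, hw0,
            smul_zero, sub_zero] at h
          exact h
        have hS2 : S.mulVec (w 2) = γ 3 • w 3 - γ 2 • w 1 := by
          have h := hSw 2 (by omega) (by omega)
          rw [show 2 + 1 = 3 from by norm_num, show 2 - 1 = 1 from by norm_num] at h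
          exact h
        have E2 : a 1 • v 1 = α • (s • w 1) - s • (γ 2 • w 2) := by
          have h := hGK2 1 (by omega) (by omega)
          rw [honeT, show (1 : ℕ) - 1 = 0 from by norm_num, hv0, smul_zero, sub_zero,
            hu, Matrix.mulVec_smul, hS1] at h
          exact h
        have E1 : β 2 • u 2 = α • v 1 + S.mulVec (v 1) - a 1 • (s • w 1) := by
          have h := hGK1 1 (by omega) (by omega)
          rw [hone, hu] at h
          exact h
        have hSv : a 1 • S.mulVec (v 1)
            = α • (s • (γ 2 • w 2)) - s • (γ 2 • (γ 3 • w 3 - γ 2 • w 1)) := by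
          have h := congrArg (fun x => S.mulVec x) E2
          simp only [Matrix.mulVec_smul, Matrix.mulVec_sub] at h
          rw [hS1, hS2] at h
          exact h
        show (a 1 * β 2) • u 2 = (-(s * (γ 2 * γ 3))) • w 3
        funext x
        have e1 := congrFun E1 x
        have e2 := congrFun E2 x
        have esv := congrFun hSv x
        simp only [Pi.smul_apply, Pi.add_apply, Pi.sub_apply, smul_eq_mul] at e1 e2 esv ⊢
        linear_combination a 1 * e1 + α * e2 + esv - s * (w 1 x) * hii
      · -- 2 ≤ j
        obtain ⟨k, rfl⟩ : ∃ k, j = k + 2 := ⟨j - 2, by omega⟩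
        specialize hu' (by omega)
        specialize hβf (by omega)
        rw [show 2 * (k + 2) - 1 = 2 * k + 3 from by omega] at hu
        rw [show 2 * (k + 2) - 3 = 2 * k + 1 from by omega,
          show k + 2 - 1 = k + 1 from by omega] at hu'
        rw [show 2 * (k + 2) - 1 = 2 * k + 3 from by omega,
          show 2 * (k + 2) - 2 = 2 * k + 2 from by omega,
          show k + 2 - 1 = k + 1 from by omega] at hβf
        rw [if_pos (by omega : 2 ≤ k + 2), show 2 * (k + 2) - 1 = 2 * k + 3 from by omega,
          show 2 * (k + 2) = 2 * k + 4 from by omega] at hii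
        have hN5 : 2 * k + 5 ≤ N := by omega
        have hS1 : S.mulVec (w (2 * k + 3))
            = γ (2 * k + 4) • w (2 * k + 4) - γ (2 * k + 3) • w (2 * k + 2) := by
          have h := hSw (2 * k + 3) (by omega) (by omega)
          rw [show 2 * k + 3 + 1 = 2 * k + 4 from by omega,
            show 2 * k + 3 - 1 = 2 * k + 2 from by omega] at h
          exact h
        have hS2 : S.mulVec (w (2 * k + 4))
            = γ (2 * k + 5) • w (2 * k + 5) - γ (2 * k + 4) • w (2 * k + 3) := by
          have h := hSw (2 * k + 4) (by omega) (by omega)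
          rw [show 2 * k + 4 + 1 = 2 * k + 5 from by omega,
            show 2 * k + 4 - 1 = 2 * k + 3 from by omega] at h
          exact h
        have hS3 : S.mulVec (w (2 * k + 2))
            = γ (2 * k + 3) • w (2 * k + 3) - γ (2 * k + 2) • w (2 * k + 1) := by
          have h := hSw (2 * k + 2) (by omega) (by omega)
          rw [show 2 * k + 2 + 1 = 2 * k + 3 from by omega,
            show 2 * k + 2 - 1 = 2 * k + 1 from by omega] at h
          exact h
        have E2 : a (k + 2) • v (k + 2)
            = α • (s • w (2 * k + 3))
              - s • (γ (2 * k + 4) • w (2 * k + 4) - γ (2 * k + 3) • w (2 * k + 2))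
              - β (k + 2) • v (k + 1) := by
          have h := hGK2 (k + 2) (by omega) (by omega)
          rw [honeT, show k + 2 - 1 = k + 1 from by omega, hu, Matrix.mulVec_smul, hS1] at h
          exact h
        have E1 : β (k + 3) • u (k + 3)
            = α • v (k + 2) + S.mulVec (v (k + 2)) - a (k + 2) • (s • w (2 * k + 3)) := by
          have h := hGK1 (k + 2) (by omega) (by omega)
          rw [hone, hu] at h
          exact h
        have E1' : β (k + 2) • (s • w (2 * k + 3))
            = α • v (k + 1) + S.mulVec (v (k + 1)) - a (k + 1) • ((-s) • w (2 * k + 1)) := by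
          have h : β (k + 2) • u (k + 2)
              = (α • (1 : Matrix (Fin n) (Fin n) ℝ) + S).mulVec (v (k + 1))
                - a (k + 1) • u (k + 1) := hGK1 (k + 1) (by omega) (by omega)
          rw [hone, hu, hu'] at h
          exact h
        have hSv : a (k + 2) • S.mulVec (v (k + 2))
            = α • (s • (γ (2 * k + 4) • w (2 * k + 4) - γ (2 * k + 3) • w (2 * k + 2)))
              - s • (γ (2 * k + 4) • (γ (2 * k + 5) • w (2 * k + 5) - γ (2 * k + 4) • w (2 * k + 3))
                - γ (2 * k + 3) • (γ (2 * k + 3) • w (2 * k + 3) - γ (2 * k + 2) • w (2 * k + 1)))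
              - β (k + 2) • S.mulVec (v (k + 1)) := by
          have h := congrArg (fun x => S.mulVec x) E2
          simp only [Matrix.mulVec_smul, Matrix.mulVec_sub] at h
          rw [hS1, hS2, hS3] at h
          exact h
        have ha1 : a (k + 1) ≠ 0 := ne_of_gt (hapos (k + 1) (by omega) (by omega))
        have hba : β (k + 2) * a (k + 1) = γ (2 * k + 3) * γ (2 * k + 2) := by
          rw [hβf]
          exact div_mul_cancel₀ _ ha1
        show (a (k + 2) * β (k + 3)) • u (k + 3)
            = (-(s * (γ (2 * k + 4) * γ (2 * k + 5)))) • w (2 * k + 5)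
        funext x
        have e1 := congrFun E1 x
        have e2 := congrFun E2 x
        have esv := congrFun hSv x
        have e1p := congrFun E1' x
        simp only [Pi.smul_apply, Pi.add_apply, Pi.sub_apply, smul_eq_mul] at e1 e2 esv e1p ⊢
        linear_combination a (k + 2) * e1 + α * e2 + esv + β (k + 2) * e1p
          - s * (w (2 * k + 3) x) * hii + s * (w (2 * k + 1) x) * hba
    -- extract the two conclusions from hvec
    have huu : u (j + 1) ⬝ᵥ u (j + 1) = 1 := by
      rw [huorth (j + 1) (j + 1) (by omega) (by omega) (by omega) (by omega), if_pos rfl]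
    have hwr : w (2 * j + 1) ⬝ᵥ w (2 * j + 1) = 1 := hww1 _ (by omega) (by omega)
    have hdot := congrArg (fun z => z ⬝ᵥ z) hvec
    simp only [smul_dotProduct, dotProduct_smul, smul_eq_mul, huu, hwr] at hdot
    have hs2 : s * s = 1 := by rcases hs with rfl | rfl <;> norm_num
    have hsq : (a j * β (j + 1)) ^ 2 = (γ (2 * j) * γ (2 * j + 1)) ^ 2 := by
      linear_combination hdot + (γ (2 * j) * γ (2 * j + 1)) ^ 2 * hs2
    have hprodpos : 0 < a j * β (j + 1) := mul_pos ha hβ'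
    have hpos2 : 0 < γ (2 * j) * γ (2 * j + 1) := mul_pos hγq hγr
    have hprod : a j * β (j + 1) = γ (2 * j) * γ (2 * j + 1) := by
      have hd : (a j * β (j + 1) - γ (2 * j) * γ (2 * j + 1))
          * (a j * β (j + 1) + γ (2 * j) * γ (2 * j + 1)) = 0 := by linear_combination hsq
      rcases mul_eq_zero.mp hd with h | h
      · linarith
      · linarith
    constructor
    · rw [eq_div_iff (ne_of_gt ha)]
      linear_combination hprod
    · apply smul_right_injective (Fin n → ℝ) (ne_of_gt hprodpos)
      show (a j * β (j + 1)) • u (j + 1) = (a j * β (j + 1)) • ((-s) • w (2 * j + 1))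
      rw [hvec, smul_smul, hprod]
      congr 1
      ring
  -- the inductive invariant
  have key : ∀ j, 1 ≤ j → 2 * j ≤ N →
      ∃ s : ℝ, (s = 1 ∨ s = -1) ∧ u j = s • w (2 * j - 1) ∧
        (2 ≤ j → u (j - 1) = (-s) • w (2 * j - 3)) ∧
        (2 ≤ j → β j = γ (2 * j - 1) * γ (2 * j - 2) / a (j - 1)) ∧
        a j ^ 2 = α ^ 2 + γ (2 * j) ^ 2 + (if 2 ≤ j then γ (2 * j - 1) ^ 2 - β j ^ 2 else 0) ∧
        α ^ 2 + γ (2 * j) ^ 2 ≤ a j ^ 2 := by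
    intro j hj
    induction j, hj using Nat.le_induction with
    | base =>
      intro hN
      have hβ1pos : 0 < β 1 := hβpos 1 (by omega) (by omega)
      have hγ1pos : 0 < γ 1 := hγpos 1 (by omega) (by omega)
      have hbu : β 1 • u 1 = γ 1 • w 1 := hβ1.trans hγ1.symm
      have huu : u 1 ⬝ᵥ u 1 = 1 := by
        rw [huorth 1 1 (by omega) (by omega) (by omega) (by omega), if_pos rfl]
      have hw11 : w 1 ⬝ᵥ w 1 = 1 := hww1 1 (by omega) (by omega)
      have hd := congrArg (fun z => z ⬝ᵥ z) hbu
      simp only [smul_dotProduct, dotProduct_smul, smul_eq_mul, huu, hw11] at hd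
      have hβγ : β 1 = γ 1 := by
        have hdd : (β 1 - γ 1) * (β 1 + γ 1) = 0 := by linear_combination hd
        rcases mul_eq_zero.mp hdd with h | h
        · linarith
        · linarith
      have hu1 : u 1 = w 1 := by
        apply smul_right_injective (Fin n → ℝ) (ne_of_gt hβ1pos)
        show β 1 • u 1 = β 1 • w 1
        rw [hbu, hβγ]
      have hS1 : S.mulVec (w 1) = γ 2 • w 2 := by
        have h := hSw 1 (by omega) (by omega)
        rw [show 1 + 1 = 2 from by norm_num, show 1 - 1 = 0 from by norm_num, hw0,
          smul_zero, sub_zero] at h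
        exact h
      have E2 : a 1 • v 1 = α • w 1 - γ 2 • w 2 := by
        have h := hGK2 1 (by omega) (by omega)
        rw [honeT, show (1 : ℕ) - 1 = 0 from by norm_num, hv0, smul_zero, sub_zero,
          hu1, hS1] at h
        exact h
      have hvv : v 1 ⬝ᵥ v 1 = 1 := by
        rw [hvorth 1 1 (by omega) (by omega) (by omega) (by omega), if_pos rfl]
      have hw22 : w 2 ⬝ᵥ w 2 = 1 := hww1 2 (by omega) (by omega)
      have hw12 : w 1 ⬝ᵥ w 2 = 0 := hww0 1 2 (by omega) (by omega) (by omega) (by omega) (by omega)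
      have hw21 : w 2 ⬝ᵥ w 1 = 0 := hww0 2 1 (by omega) (by omega) (by omega) (by omega) (by omega)
      have hd2 := congrArg (fun z => z ⬝ᵥ z) E2
      simp only [smul_dotProduct, dotProduct_smul, dotProduct_sub,
        sub_dotProduct, smul_eq_mul, hvv, hw11, hw22, hw12, hw21] at hd2
      have hii : a 1 ^ 2 = α ^ 2 + γ 2 ^ 2 := by linear_combination hd2
      refine ⟨1, Or.inl rfl, ?_, ?_, ?_, ?_, ?_⟩
      · rw [one_smul, show 2 * 1 - 1 = 1 from by norm_num]
        exact hu1
      · intro h; omega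
      · intro h; omega
      · rw [if_neg (by omega), show 2 * 1 = 2 from by norm_num]
        linear_combination hii
      · rw [show 2 * 1 = 2 from by norm_num]
        linarith [hii]
    | succ j hj IH =>
      intro hN2
      obtain ⟨s, hs, hu, hu', hβf, hii, hiv⟩ := IH (by omega)
      obtain ⟨hβnew, hunew⟩ := L j s hj (by omega) hs hu hu' hβf hii
      have ha : 0 < a j := hapos j hj (by omega)
      have haj1 : 0 < a (j + 1) := hapos (j + 1) (by omega) (by omega)
      have hβj1 : 0 < β (j + 1) := hβpos (j + 1) (by omega) (by omega)
      have hγ2j : 0 < γ (2 * j) := hγpos _ (by omega) (by omega)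
      have hγ2j1 : 0 < γ (2 * j + 1) := hγpos _ (by omega) (by omega)
      have hγ2j2 : 0 < γ (2 * j + 2) := hγpos _ (by omega) (by omega)
      have hS1 : S.mulVec (w (2 * j + 1))
          = γ (2 * j + 2) • w (2 * j + 2) - γ (2 * j + 1) • w (2 * j) := by
        have h := hSw (2 * j + 1) (by omega) (by omega)
        rw [show 2 * j + 1 + 1 = 2 * j + 2 from by omega,
          show 2 * j + 1 - 1 = 2 * j from by omega] at h
        exact h
      have E2 : a (j + 1) • v (j + 1)
          = α • ((-s) • w (2 * j + 1))
            - (-s) • (γ (2 * j + 2) • w (2 * j + 2) - γ (2 * j + 1) • w (2 * j))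
            - β (j + 1) • v j := by
        have h := hGK2 (j + 1) (by omega) (by omega)
        rw [honeT, show j + 1 - 1 = j from by omega, hunew, Matrix.mulVec_smul, hS1] at h
        exact h
      have hre : a (j + 1) • v (j + 1) + β (j + 1) • v j
          = α • ((-s) • w (2 * j + 1))
            - (-s) • (γ (2 * j + 2) • w (2 * j + 2) - γ (2 * j + 1) • w (2 * j)) := by
        rw [E2]; abel
      have hvv1 : v (j + 1) ⬝ᵥ v (j + 1) = 1 := by
        rw [hvorth (j + 1) (j + 1) (by omega) (by omega) (by omega) (by omega), if_pos rfl]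
      have hvv0 : v (j + 1) ⬝ᵥ v j = 0 := by
        rw [hvorth (j + 1) j (by omega) (by omega) (by omega) (by omega), if_neg (by omega)]
      have hvv0' : v j ⬝ᵥ v (j + 1) = 0 := by
        rw [hvorth j (j + 1) (by omega) (by omega) (by omega) (by omega), if_neg (by omega)]
      have hvvjj : v j ⬝ᵥ v j = 1 := by
        rw [hvorth j j (by omega) (by omega) (by omega) (by omega), if_pos rfl]
      have w00 : w (2 * j) ⬝ᵥ w (2 * j) = 1 := hww1 _ (by omega) (by omega)
      have w11 : w (2 * j + 1) ⬝ᵥ w (2 * j + 1) = 1 := hww1 _ (by omega) (by omega)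
      have w22 : w (2 * j + 2) ⬝ᵥ w (2 * j + 2) = 1 := hww1 _ (by omega) (by omega)
      have w01 : w (2 * j) ⬝ᵥ w (2 * j + 1) = 0 :=
        hww0 _ _ (by omega) (by omega) (by omega) (by omega) (by omega)
      have w10 : w (2 * j + 1) ⬝ᵥ w (2 * j) = 0 :=
        hww0 _ _ (by omega) (by omega) (by omega) (by omega) (by omega)
      have w02 : w (2 * j) ⬝ᵥ w (2 * j + 2) = 0 :=
        hww0 _ _ (by omega) (by omega) (by omega) (by omega) (by omega)
      have w20 : w (2 * j + 2) ⬝ᵥ w (2 * j) = 0 :=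
        hww0 _ _ (by omega) (by omega) (by omega) (by omega) (by omega)
      have w12 : w (2 * j + 1) ⬝ᵥ w (2 * j + 2) = 0 :=
        hww0 _ _ (by omega) (by omega) (by omega) (by omega) (by omega)
      have w21 : w (2 * j + 2) ⬝ᵥ w (2 * j + 1) = 0 :=
        hww0 _ _ (by omega) (by omega) (by omega) (by omega) (by omega)
      have hd2 := congrArg (fun z => z ⬝ᵥ z) hre
      simp only [smul_dotProduct, dotProduct_smul, dotProduct_sub,
        sub_dotProduct, dotProduct_add, add_dotProduct, smul_eq_mul,
        hvv1, hvv0, hvv0', hvvjj, w00, w11, w22, w01, w10, w02, w20, w12, w21] at hd2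
      have hs2 : s * s = 1 := by rcases hs with rfl | rfl <;> norm_num
      have hiinew : a (j + 1) ^ 2
          = α ^ 2 + γ (2 * j + 2) ^ 2 + (γ (2 * j + 1) ^ 2 - β (j + 1) ^ 2) := by
        linear_combination hd2 + (α ^ 2 + γ (2 * j + 2) ^ 2 + γ (2 * j + 1) ^ 2) * hs2
      have hba : β (j + 1) * a j = γ (2 * j + 1) * γ (2 * j) := by
        rw [hβnew]
        exact div_mul_cancel₀ _ (ne_of_gt ha)
      have hsq : β (j + 1) ^ 2 * a j ^ 2 = γ (2 * j + 1) ^ 2 * γ (2 * j) ^ 2 := by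
        linear_combination (β (j + 1) * a j + γ (2 * j + 1) * γ (2 * j)) * hba
      have hlt : γ (2 * j) ^ 2 < a j ^ 2 := by linarith [hiv, hα2]
      have hbb : β (j + 1) ^ 2 ≤ γ (2 * j + 1) ^ 2 := by
        have h1 : β (j + 1) ^ 2 * a j ^ 2 ≤ γ (2 * j + 1) ^ 2 * a j ^ 2 := by
          rw [hsq]
          exact mul_le_mul_of_nonneg_left hlt.le (sq_nonneg _)
        exact le_of_mul_le_mul_right h1 (by positivity)
      have hivnew : α ^ 2 + γ (2 * j + 2) ^ 2 ≤ a (j + 1) ^ 2 := by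
        rw [hiinew]; linarith
      refine ⟨-s, ?_, ?_, ?_, ?_, ?_, ?_⟩
      · rcases hs with rfl | rfl
        · exact Or.inr rfl
        · exact Or.inl (by norm_num)
      · rw [show 2 * (j + 1) - 1 = 2 * j + 1 from by omega]
        exact hunew
      · intro _
        rw [show j + 1 - 1 = j from by omega, show 2 * (j + 1) - 3 = 2 * j - 1 from by omega,
          neg_neg]
        exact hu
      · intro _
        rw [show 2 * (j + 1) - 1 = 2 * j + 1 from by omega,
          show 2 * (j + 1) - 2 = 2 * j from by omega, show j + 1 - 1 = j from by omega]
        exact hβnew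
      · rw [if_pos (by omega), show 2 * (j + 1) - 1 = 2 * j + 1 from by omega,
          show 2 * (j + 1) = 2 * j + 2 from by omega]
        exact hiinew
      · rw [show 2 * (j + 1) = 2 * j + 2 from by omega]
        exact hivnew
  -- conclusion
  intro j hj hjN
  obtain ⟨s, hs, hu, hu', hβf, hii, hiv⟩ := key j hj (by omega)
  obtain ⟨hβnew, -⟩ := L j s hj hjN hs hu hu' hβf hii
  have ha : 0 < a j := hapos j hj (by omega)
  have hγq : 0 < γ (2 * j) := hγpos _ (by omega) (by omega)
  have hγr : 0 < γ (2 * j + 1) := hγpos _ (by omega) (by omega)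
  have hlt2 : γ (2 * j) ^ 2 < a j ^ 2 := by linarith [hα2]
  have hlt : γ (2 * j) < a j := by nlinarith [hlt2, hγq, ha]
  refine ⟨?_, hlt, hβnew, ?_⟩
  · exact le_trans (Real.sqrt_le_sqrt hiv) (le_of_eq (Real.sqrt_sq ha.le))
  · rw [hβnew, div_lt_iff₀ ha]
    exact (mul_lt_mul_iff_right₀ hγr).mpr hlt
end

section
/- In the LQ factorization recursion of S³LQ, the first-subdiagonal entries vanish: λ_{i+1} = γ_{i+1} c_{i-1} c_i + α s_i = 0 for all i, given the Givens recursions. -/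
theorem s3lq_lambda_vanishes (α : ℝ) (hα : α ≠ 0)
    (γ δ δt c s lam : ℕ → ℝ)
    (hγ : ∀ i, 1 ≤ i → γ (i + 1) > 0)
    (hδt1 : δt 1 = α) (hc0 : c 0 = 1)
    (hδ : ∀ i, 1 ≤ i → δ i = Real.sqrt (δt i ^ 2 + γ (i + 1) ^ 2))
    (hc : ∀ i, 1 ≤ i → c i = δt i / δ i)
    (hs : ∀ i, 1 ≤ i → s i = -γ (i + 1) / δ i)
    (hδt : ∀ i, 1 ≤ i → δt (i + 1) = α * c i - γ (i + 1) * c (i - 1) * s i)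
    (hlam : ∀ i, 1 ≤ i → lam (i + 1) = γ (i + 1) * c (i - 1) * c i + α * s i) :
    ∀ i, 1 ≤ i → lam (i + 1) = 0 := by
  have hδpos : ∀ i, 1 ≤ i → 0 < δ i := by
    intro i hi
    rw [hδ i hi]
    apply Real.sqrt_pos.mpr
    have := hγ i hi
    nlinarith [sq_nonneg (δt i)]
  have hδsq : ∀ i, 1 ≤ i → δ i ^ 2 = δt i ^ 2 + γ (i + 1) ^ 2 := by
    intro i hi
    rw [hδ i hi]
    exact Real.sq_sqrt (by nlinarith [hγ i hi, sq_nonneg (δt i)])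
  have key : ∀ i, 1 ≤ i → c (i - 1) * δt i = α := by
    intro i hi
    induction i, hi using Nat.le_induction with
    | base => simp [hc0, hδt1]
    | succ n hn ih =>
      have hd := hδpos n hn
      have hd2 := hδsq n hn
      have : (n + 1 - 1 : ℕ) = n := by omega
      rw [this, hδt n hn, hc n hn, hs n hn]
      field_simp
      linear_combination γ (n + 1) ^ 2 * ih - α * hd2
  intro i hi
  have hd := hδpos i hi
  have hk := key i hi
  rw [hlam i hi, hc i hi, hs i hi]
  field_simp
  linear_combination γ (i + 1) * hk
end
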